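/- Let A ⊆ ℝⁿ be arbitrary, fix q > 1, and set A_k = A ∩ {x : q^k ≤ |x| < q^{k+1}} for k ∈ ℕ. If Σ_k c_α(A_k) / q^{k(n−α)} < ∞, then there exists a positive Radon measure ξ on ℝⁿ whose Riesz potential U^ξ is not identically +∞ and satisfies U^ξ ≥ 1 nearly everywhere on A (i.e., the exceptional subset of A has inner Riesz capacity zero). -/

import Mathlib

open MeasureTheory ENNReal Set
noncomputable section

/-- Euclidean space ℝⁿ. -/
abbrev Eucl (n : ℕ) := EuclideanSpace ℝ (Fin n)

/-- The Riesz kernel `|x - z|^(α - n)` of order `α` on ℝⁿ, with values in `ℝ≥0∞`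
(so that the kernel is `∞` on the diagonal). -/
def rieszK (α : ℝ) (n : ℕ) (x z : Eucl n) : ℝ≥0∞ :=
  (ENNReal.ofReal ‖x - z‖) ^ (α - (n : ℝ))

/-- The Riesz potential `U^μ(x) = ∫ |x - z|^(α-n) dμ(z)`. -/
def pot (α : ℝ) (n : ℕ) (μ : Measure (Eucl n)) (x : Eucl n) : ℝ≥0∞ :=
  ∫⁻ z, rieszK α n x z ∂μ

/-- The mutual Riesz energy `E(μ, ν) = ∬ |x - z|^(α-n) d(μ ⊗ ν)(x, z)`. -/
def energy (α : ℝ) (n : ℕ) (μ ν : Measure (Eucl n)) : ℝ≥0∞ :=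
  ∫⁻ x, pot α n ν x ∂μ

/-- The inner Riesz capacity `c_α(A) = 1 / inf {E(μ) : μ carried by A, μ(ℝⁿ) = 1}`. -/
def innerCap (α : ℝ) (n : ℕ) (A : Set (Eucl n)) : ℝ≥0∞ :=
  1 / ⨅ (μ : Measure (Eucl n)) (_ : μ Aᶜ = 0 ∧ μ Set.univ = 1), energy α n μ μ

section RZaux
open Metric
variable {n : ℕ} {α : ℝ}

lemma rz_kernel_symm (x z : Eucl n) : rieszK α n x z = rieszK α n z x := by
  unfold rieszK; rw [norm_sub_rev]

lemma rz_kernel_meas : Measurable (fun p : Eucl n × Eucl n => rieszK α n p.1 p.2) := by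
  unfold rieszK
  exact (ENNReal.continuous_rpow_const.comp
    (ENNReal.continuous_ofReal.comp ((continuous_fst.sub continuous_snd).norm))).measurable

lemma rz_pot_meas (μ : Measure (Eucl n)) [SFinite μ] : Measurable (pot α n μ) :=
  Measurable.lintegral_prod_right (f := fun x z => rieszK α n x z) rz_kernel_meas

lemma rz_pot_mono {μ ν : Measure (Eucl n)} (h : μ ≤ ν) (x : Eucl n) :
    pot α n μ x ≤ pot α n ν x := lintegral_mono' h le_rfl

lemma rz_pot_smul (c : ℝ≥0∞) (μ : Measure (Eucl n)) (x : Eucl n) :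
    pot α n (c • μ) x = c * pot α n μ x := lintegral_smul_measure ..

lemma rz_pot_add (μ ν : Measure (Eucl n)) (x : Eucl n) :
    pot α n (μ + ν) x = pot α n μ x + pot α n ν x := lintegral_add_measure ..

lemma rz_pot_sum (μs : ℕ → Measure (Eucl n)) (x : Eucl n) :
    pot α n (Measure.sum μs) x = ∑' i, pot α n (μs i) x := lintegral_sum_measure ..

lemma rz_pot_zero (x : Eucl n) : pot α n (0 : Measure (Eucl n)) x = 0 :=
  lintegral_zero_measure _

lemma rz_energy_mono {μ μ' ν ν' : Measure (Eucl n)} (h1 : μ ≤ μ') (h2 : ν ≤ ν') :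
    energy α n μ ν ≤ energy α n μ' ν' :=
  lintegral_mono' h1 fun x => rz_pot_mono h2 x

lemma rz_energy_smul_left (c : ℝ≥0∞) (μ ν : Measure (Eucl n)) :
    energy α n (c • μ) ν = c * energy α n μ ν := lintegral_smul_measure ..

lemma rz_energy_smul_right (c : ℝ≥0∞) (hc : c ≠ ⊤) (μ ν : Measure (Eucl n)) :
    energy α n μ (c • ν) = c * energy α n μ ν := by
  unfold energy
  simp only [rz_pot_smul]
  exact lintegral_const_mul' c _ hc

lemma rz_energy_add_left (μ ν κ : Measure (Eucl n)) :
    energy α n (μ + ν) κ = energy α n μ κ + energy α n ν κ := lintegral_add_measure ..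

lemma rz_energy_add_right (κ μ ν : Measure (Eucl n)) [SFinite μ] :
    energy α n κ (μ + ν) = energy α n κ μ + energy α n κ ν := by
  unfold energy
  simp only [rz_pot_add]
  exact lintegral_add_left (rz_pot_meas μ) _

lemma rz_energy_comm (μ ν : Measure (Eucl n)) [SFinite μ] [SFinite ν] :
    energy α n μ ν = energy α n ν μ := by
  unfold energy pot
  rw [lintegral_lintegral_swap rz_kernel_meas.aemeasurable]
  refine lintegral_congr fun z => lintegral_congr fun x => rz_kernel_symm ..

def rieszInf (α : ℝ) (n : ℕ) (S : Set (Eucl n)) : ℝ≥0∞ :=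
  ⨅ (μ : Measure (Eucl n)) (_ : μ Sᶜ = 0 ∧ μ Set.univ = 1), energy α n μ μ

lemma rz_innerCap_def (S : Set (Eucl n)) : innerCap α n S = 1 / rieszInf α n S := rfl

lemma rz_innerCap_zero {S : Set (Eucl n)} (h : rieszInf α n S = ⊤) : innerCap α n S = 0 := by
  rw [rz_innerCap_def, h]; simp

lemma rz_rieszInf_le {S : Set (Eucl n)} {μ : Measure (Eucl n)}
    (h1 : μ Sᶜ = 0) (h2 : μ Set.univ = 1) : rieszInf α n S ≤ energy α n μ μ :=
  iInf_le_of_le μ (iInf_le _ ⟨h1, h2⟩)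

lemma rz_le_rieszInf {S : Set (Eucl n)} {c : ℝ≥0∞}
    (h : ∀ μ : Measure (Eucl n), μ Sᶜ = 0 → μ Set.univ = 1 → c ≤ energy α n μ μ) :
    c ≤ rieszInf α n S :=
  le_iInf fun μ => le_iInf fun hμ => h μ hμ.1 hμ.2

lemma rz_rieszInf_anti {S T : Set (Eucl n)} (h : S ⊆ T) :
    rieszInf α n T ≤ rieszInf α n S :=
  rz_le_rieszInf fun μ h1 h2 =>
    rz_rieszInf_le (measure_mono_null (compl_subset_compl.mpr h) h1) h2

lemma rz_kernel_ge (hαn : α - (n:ℝ) < 0) {x z : Eucl n} {d : ℝ} (h : ‖x - z‖ ≤ d) :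
    (ENNReal.ofReal d) ^ (α - (n:ℝ)) ≤ rieszK α n x z := by
  unfold rieszK
  rw [show α - (n:ℝ) = -((n:ℝ) - α) by ring, ENNReal.rpow_neg, ENNReal.rpow_neg]
  exact ENNReal.inv_le_inv.mpr
    (ENNReal.rpow_le_rpow (ENNReal.ofReal_le_ofReal h) (by linarith))

lemma rz_kernel_le (hαn : α - (n:ℝ) < 0) {x z : Eucl n} {d : ℝ} (h : d ≤ ‖x - z‖) :
    rieszK α n x z ≤ (ENNReal.ofReal d) ^ (α - (n:ℝ)) := by
  unfold rieszK
  rw [show α - (n:ℝ) = -((n:ℝ) - α) by ring, ENNReal.rpow_neg, ENNReal.rpow_neg]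
  exact ENNReal.inv_le_inv.mpr
    (ENNReal.rpow_le_rpow (ENNReal.ofReal_le_ofReal h) (by linarith))

lemma rz_ae_mem {S : Set (Eucl n)} {μ : Measure (Eucl n)} (h : μ Sᶜ = 0) :
    ∀ᵐ x ∂μ, x ∈ S := by
  rw [ae_iff]; exact h

lemma rz_rieszInf_ge_of_bounded (hαn : α - (n:ℝ) < 0) {S : Set (Eucl n)} {d : ℝ}
    (hd : ∀ x ∈ S, ∀ z ∈ S, ‖x - z‖ ≤ d) :
    (ENNReal.ofReal d) ^ (α - (n:ℝ)) ≤ rieszInf α n S := by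
  apply rz_le_rieszInf; intro μ h1 h2
  have hae : ∀ᵐ x ∂μ, x ∈ S := rz_ae_mem h1
  have hpot : ∀ᵐ x ∂μ, (ENNReal.ofReal d) ^ (α - (n:ℝ)) ≤ pot α n μ x := by
    filter_upwards [hae] with x hx
    calc (ENNReal.ofReal d) ^ (α - (n:ℝ))
        = ∫⁻ _, (ENNReal.ofReal d) ^ (α - (n:ℝ)) ∂μ := by rw [lintegral_const, h2, mul_one]
      _ ≤ ∫⁻ z, rieszK α n x z ∂μ := lintegral_mono_ae (by
          filter_upwards [hae] with z hz
          exact rz_kernel_ge hαn (hd x hx z hz))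
  calc (ENNReal.ofReal d) ^ (α - (n:ℝ))
      = ∫⁻ _, (ENNReal.ofReal d) ^ (α - (n:ℝ)) ∂μ := by rw [lintegral_const, h2, mul_one]
    _ ≤ ∫⁻ x, pot α n μ x ∂μ := lintegral_mono_ae hpot

lemma rz_rieszInf_singleton (hαn : α - (n:ℝ) < 0) {S : Set (Eucl n)} {p : Eucl n}
    (h : S ⊆ {p}) : rieszInf α n S = ⊤ := by
  apply top_unique
  apply rz_le_rieszInf
  intro μ h1 h2
  have h0 : μ ({p}ᶜ) = 0 := measure_mono_null (compl_subset_compl.mpr h) h1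
  have hp : μ {p} = 1 := by
    have hh := measure_add_measure_compl (μ := μ) (MeasurableSet.singleton p)
    rw [h0, add_zero, h2] at hh; exact hh
  have hK : rieszK α n p p = ⊤ := by
    unfold rieszK
    rw [sub_self, norm_zero, ENNReal.ofReal_zero, ENNReal.zero_rpow_of_neg hαn]
  have hpot : pot α n μ p = ⊤ := by
    refine top_unique ?_
    calc (⊤:ℝ≥0∞) = rieszK α n p p * μ {p} := by rw [hp, hK, mul_one]
      _ = ∫⁻ z in {p}, rieszK α n p z ∂μ := (lintegral_singleton _ _).symm
      _ ≤ pot α n μ p := setLIntegral_le_lintegral _ _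
  calc (⊤:ℝ≥0∞) = pot α n μ p * μ {p} := by rw [hp, hpot, mul_one]
    _ = ∫⁻ x in {p}, pot α n μ x ∂μ := (lintegral_singleton _ _).symm
    _ ≤ energy α n μ μ := setLIntegral_le_lintegral _ _

end RZaux

section RZstep
open Metric
variable {n : ℕ} {α : ℝ}

lemma rz_num1 : (2⁻¹ : ℝ≥0∞) + 2⁻¹ = 1 := ENNReal.inv_two_add_inv_two

lemma rz_num2 : (4 : ℝ≥0∞) * 2⁻¹ * 2⁻¹ = 1 := by
  rw [show (4:ℝ≥0∞) = 2*2 by norm_num, mul_assoc (2*2 : ℝ≥0∞),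
    show (2⁻¹ : ℝ≥0∞) * 2⁻¹ = (2*2 : ℝ≥0∞)⁻¹ by
      rw [ENNReal.mul_inv (by norm_num) (by norm_num)],
    ENNReal.mul_inv_cancel (by norm_num) (by norm_num)]

lemma rz_num3 (m : ℝ≥0∞) : m * 2⁻¹ + m * 4⁻¹ + m * 4⁻¹ = m := by
  rw [← mul_add, ← mul_add, show (2⁻¹ : ℝ≥0∞) + 4⁻¹ + 4⁻¹ = 1 from ?_, mul_one]
  rw [show (4:ℝ≥0∞)⁻¹ = 2⁻¹ * 2⁻¹ by
      rw [← ENNReal.mul_inv (by norm_num) (by norm_num)]; norm_num,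
    add_assoc, ← add_mul, rz_num1, one_mul, rz_num1]

lemma rz_step {S : Set (Eucl n)} (hS0 : rieszInf α n S ≠ 0) (hStop : rieszInf α n S ≠ ⊤)
    {μ : Measure (Eucl n)} (hc : μ Sᶜ = 0) (hm : μ Set.univ = 1)
    (hE : energy α n μ μ ≤ rieszInf α n S + rieszInf α n S * 2⁻¹) :
    2 * rieszInf α n S ≤
      rieszInf α n {x ∈ S | pot α n ((4 * (rieszInf α n S)⁻¹) • μ) x < 1} := by
  set m := rieszInf α n S with hm_def
  apply rz_le_rieszInf
  intro lam hlc hlm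
  by_cases hEl : energy α n lam lam = ⊤
  · rw [hEl]; exact le_top
  haveI : IsFiniteMeasure μ := ⟨by rw [hm]; exact one_lt_top⟩
  haveI : IsFiniteMeasure lam := ⟨by rw [hlm]; exact one_lt_top⟩
  have hTS : {x ∈ S | pot α n ((4 * m⁻¹) • μ) x < 1} ⊆ S := sep_subset _ _
  have hlS : lam Sᶜ = 0 := measure_mono_null (compl_subset_compl.mpr hTS) hlc
  have hpot : ∀ᵐ x ∂lam, pot α n μ x ≤ m * 4⁻¹ := by
    filter_upwards [rz_ae_mem hlc] with x hx
    have h1 : (4 * m⁻¹) * pot α n μ x < 1 := by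
      have h := hx.2; rwa [rz_pot_smul] at h
    have h2 : m * ((4 * m⁻¹) * pot α n μ x) ≤ m * 1 := mul_le_mul_right h1.le m
    rw [mul_one, show m * ((4 * m⁻¹) * pot α n μ x) = (m * m⁻¹) * (4 * pot α n μ x) by ring,
      ENNReal.mul_inv_cancel hS0 hStop, one_mul] at h2
    calc pot α n μ x = 4⁻¹ * (4 * pot α n μ x) := by
          rw [← mul_assoc, ENNReal.inv_mul_cancel (by norm_num) (by norm_num), one_mul]
      _ ≤ 4⁻¹ * m := mul_le_mul_right h2 _
      _ = m * 4⁻¹ := mul_comm _ _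
  have hIle : energy α n lam μ ≤ m * 4⁻¹ := by
    calc energy α n lam μ = ∫⁻ x, pot α n μ x ∂lam := rfl
      _ ≤ ∫⁻ _, m * 4⁻¹ ∂lam := lintegral_mono_ae hpot
      _ = m * 4⁻¹ := by rw [lintegral_const, hlm, mul_one]
  have hIcomm : energy α n μ lam = energy α n lam μ := rz_energy_comm ..
  have hνc : ((2⁻¹ : ℝ≥0∞) • (μ + lam)) Sᶜ = 0 := by
    rw [Measure.smul_apply, Measure.add_apply, hc, hlS]; simp
  have hνm : ((2⁻¹ : ℝ≥0∞) • (μ + lam)) Set.univ = 1 := by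
    rw [Measure.smul_apply, Measure.add_apply, hm, hlm, smul_eq_mul, mul_add, mul_one]
    exact rz_num1
  have hbase : m ≤ energy α n ((2⁻¹ : ℝ≥0∞) • (μ + lam)) ((2⁻¹ : ℝ≥0∞) • (μ + lam)) :=
    rz_rieszInf_le hνc hνm
  rw [rz_energy_smul_left, rz_energy_smul_right 2⁻¹ (by norm_num), rz_energy_add_left,
    rz_energy_add_right, rz_energy_add_right] at hbase
  set X := energy α n μ μ + energy α n μ lam + (energy α n lam μ + energy α n lam lam) with hX_def
  have hbase2 : m ≤ 2⁻¹ * (2⁻¹ * X) := hbase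
  have hX4 : 4 * m ≤ X := by
    calc 4 * m ≤ 4 * (2⁻¹ * (2⁻¹ * X)) := mul_le_mul_right hbase2 _
      _ = (4 * 2⁻¹ * 2⁻¹) * X := by ring
      _ = X := by rw [rz_num2, one_mul]
  have hXle : X ≤ 2 * m + energy α n lam lam := by
    calc X ≤ (m + m * 2⁻¹) + m * 4⁻¹ + (m * 4⁻¹ + energy α n lam lam) :=
        add_le_add (add_le_add hE (hIcomm ▸ hIle)) (add_le_add hIle le_rfl)
      _ = (m + (m * 2⁻¹ + m * 4⁻¹ + m * 4⁻¹)) + energy α n lam lam := by ring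
      _ = 2 * m + energy α n lam lam := by rw [rz_num3, ← two_mul]
  have hfin : 2 * m + 2 * m ≤ 2 * m + energy α n lam lam := by
    calc 2 * m + 2 * m = 4 * m := by ring
      _ ≤ X := hX4
      _ ≤ _ := hXle
  exact (ENNReal.add_le_add_iff_left (mul_ne_top (by norm_num) hStop)).mp hfin

open Classical in
def rzNearMin (α : ℝ) (n : ℕ) (S : Set (Eucl n)) : Measure (Eucl n) :=
  if h : ∃ μ : Measure (Eucl n), (μ Sᶜ = 0 ∧ μ Set.univ = 1) ∧
      energy α n μ μ ≤ rieszInf α n S + rieszInf α n S * 2⁻¹ then h.choose else 0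

lemma rzNearMin_spec {S : Set (Eucl n)} (h0 : rieszInf α n S ≠ 0)
    (htop : rieszInf α n S ≠ ⊤) :
    ((rzNearMin α n S) Sᶜ = 0 ∧ (rzNearMin α n S) Set.univ = 1) ∧
      energy α n (rzNearMin α n S) (rzNearMin α n S) ≤
        rieszInf α n S + rieszInf α n S * 2⁻¹ := by
  have hlt : rieszInf α n S < rieszInf α n S + rieszInf α n S * 2⁻¹ :=
    ENNReal.lt_add_right htop (mul_ne_zero h0 (by norm_num))
  have hex : ∃ μ : Measure (Eucl n), (μ Sᶜ = 0 ∧ μ Set.univ = 1) ∧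
      energy α n μ μ ≤ rieszInf α n S + rieszInf α n S * 2⁻¹ := by
    have h1 := hlt
    rw [show rieszInf α n S = ⨅ (μ : Measure (Eucl n))
        (_ : μ Sᶜ = 0 ∧ μ Set.univ = 1), energy α n μ μ from rfl] at h1
    obtain ⟨μ, hμ⟩ := iInf_lt_iff.mp h1
    obtain ⟨hadm, hlt2⟩ := iInf_lt_iff.mp hμ
    exact ⟨μ, hadm, hlt2.le⟩
  rw [rzNearMin, dif_pos hex]
  exact hex.choose_spec

open Classical in
def rzStepMeas (α : ℝ) (n : ℕ) (S : Set (Eucl n)) : Measure (Eucl n) :=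
  if rieszInf α n S ≠ 0 ∧ rieszInf α n S ≠ ⊤ then
    (4 * (rieszInf α n S)⁻¹) • rzNearMin α n S else 0

def rzStepSet (α : ℝ) (n : ℕ) (S : Set (Eucl n)) : Set (Eucl n) :=
  {x ∈ S | pot α n (rzStepMeas α n S) x < 1}

def rzTower (α : ℝ) (n : ℕ) (A : Set (Eucl n)) : ℕ → Set (Eucl n)
  | 0 => A
  | (i+1) => rzStepSet α n (rzTower α n A i)

lemma rz_stepMeas_carried (S : Set (Eucl n)) : rzStepMeas α n S Sᶜ = 0 := by
  rw [rzStepMeas]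
  split_ifs with h
  · rw [Measure.smul_apply, (rzNearMin_spec h.1 h.2).1.1]; simp
  · simp

lemma rz_stepMeas_mass (S : Set (Eucl n)) :
    rzStepMeas α n S Set.univ ≤ 4 * (rieszInf α n S)⁻¹ := by
  rw [rzStepMeas]
  split_ifs with h
  · rw [Measure.smul_apply, (rzNearMin_spec h.1 h.2).1.2]; simp
  · simp

lemma rz_stepMeas_finite (S : Set (Eucl n)) (h0 : rieszInf α n S ≠ 0) :
    IsFiniteMeasure (rzStepMeas α n S) := by
  constructor
  refine lt_of_le_of_lt (rz_stepMeas_mass S) ?_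
  have h1 : (rieszInf α n S)⁻¹ < ⊤ := ENNReal.inv_lt_top.mpr h0.bot_lt
  exact ENNReal.mul_lt_top (by norm_num) h1

lemma rz_step_doubling (S : Set (Eucl n)) (h0 : rieszInf α n S ≠ 0) :
    2 * rieszInf α n S ≤ rieszInf α n (rzStepSet α n S) := by
  by_cases htop : rieszInf α n S = ⊤
  · have hS : rzStepSet α n S = S := by
      have hz : rzStepMeas α n S = 0 := by
        rw [rzStepMeas, if_neg]; intro h; exact h.2 htop
      ext x
      simp [rzStepSet, hz, rz_pot_zero]
    rw [hS, htop]
    simp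
  · have := rz_step (α := α) (n := n) h0 htop (rzNearMin_spec h0 htop).1.1
      (rzNearMin_spec h0 htop).1.2 (rzNearMin_spec h0 htop).2
    have heq : rzStepSet α n S =
        {x ∈ S | pot α n ((4 * (rieszInf α n S)⁻¹) • rzNearMin α n S) x < 1} := by
      rw [rzStepSet, rzStepMeas, if_pos ⟨h0, htop⟩]
    rw [heq]
    exact this

lemma rz_tower_subset (A : Set (Eucl n)) : ∀ i, rzTower α n A i ⊆ A := by
  intro i; induction i with
  | zero => exact subset_rfl
  | succ i ih => exact fun x hx => ih hx.1

lemma rz_tower_rieszInf (A : Set (Eucl n)) (h0 : rieszInf α n A ≠ 0) :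
    ∀ i, 2 ^ i * rieszInf α n A ≤ rieszInf α n (rzTower α n A i) := by
  intro i; induction i with
  | zero => rw [pow_zero, one_mul]; exact le_rfl
  | succ i ih =>
    have hne : rieszInf α n (rzTower α n A i) ≠ 0 := by
      intro hz
      rw [hz] at ih
      exact (mul_ne_zero (pow_ne_zero i (by norm_num)) h0) (le_antisymm ih zero_le)
    calc 2 ^ (i+1) * rieszInf α n A = 2 * (2 ^ i * rieszInf α n A) := by ring
      _ ≤ 2 * rieszInf α n (rzTower α n A i) := mul_le_mul_right ih _
      _ ≤ rieszInf α n (rzTower α n A (i+1)) := rz_step_doubling _ hne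

lemma rz_piece (A : Set (Eucl n)) (h0 : rieszInf α n A ≠ 0) :
    ∃ ξ : Measure (Eucl n), SFinite ξ ∧ ξ Aᶜ = 0 ∧
      ξ Set.univ ≤ 8 * (rieszInf α n A)⁻¹ ∧
      rieszInf α n {x ∈ A | pot α n ξ x < 1} = ⊤ := by
  set m0 := rieszInf α n A with hm0
  set ν : ℕ → Measure (Eucl n) := fun i => rzStepMeas α n (rzTower α n A i) with hν
  have hνfin : ∀ i, IsFiniteMeasure (ν i) := by
    intro i
    apply rz_stepMeas_finite
    intro hz
    have := rz_tower_rieszInf A h0 i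
    rw [hz] at this
    exact (mul_ne_zero (pow_ne_zero i (by norm_num)) h0) (le_antisymm this zero_le)
  haveI : ∀ i, SFinite (ν i) := fun i => by haveI := hνfin i; infer_instance
  refine ⟨Measure.sum ν, inferInstance, ?_, ?_, ?_⟩
  · rw [Measure.sum_apply_eq_zero]
    intro i
    exact measure_mono_null (compl_subset_compl.mpr (rz_tower_subset A i))
      (rz_stepMeas_carried _)
  · rw [Measure.sum_apply _ MeasurableSet.univ]
    calc ∑' i, ν i Set.univ ≤ ∑' i, (4 * m0⁻¹) * 2⁻¹ ^ i := by
          apply ENNReal.tsum_le_tsum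
          intro i
          calc ν i Set.univ ≤ 4 * (rieszInf α n (rzTower α n A i))⁻¹ := rz_stepMeas_mass _
            _ ≤ 4 * (2 ^ i * m0)⁻¹ := by
                exact mul_le_mul_right (ENNReal.inv_le_inv.mpr (rz_tower_rieszInf A h0 i)) _
            _ = (4 * m0⁻¹) * 2⁻¹ ^ i := by
                rw [ENNReal.mul_inv (Or.inl (pow_ne_zero i (by norm_num)))
                  (Or.inl (ENNReal.pow_ne_top (by norm_num))), ← ENNReal.inv_pow]
                ring
      _ = (4 * m0⁻¹) * 2 := by
          rw [ENNReal.tsum_mul_left, ENNReal.tsum_geometric,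
            show (1 - 2⁻¹ : ℝ≥0∞) = 2⁻¹ by norm_num, inv_inv]
      _ = 8 * m0⁻¹ := by ring
  · set B := {x ∈ A | pot α n (Measure.sum ν) x < 1} with hB
    have hBsub : ∀ i, B ⊆ rzTower α n A i := by
      intro i; induction i with
      | zero => exact fun x hx => hx.1
      | succ i ih =>
        intro x hx
        refine ⟨ih hx, ?_⟩
        refine lt_of_le_of_lt ?_ hx.2
        rw [rz_pot_sum]
        exact ENNReal.le_tsum i
    by_cases hm0top : m0 = ⊤
    · refine top_unique ?_
      calc (⊤:ℝ≥0∞) = m0 := hm0top.symm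
        _ ≤ rieszInf α n B := rz_rieszInf_anti (hBsub 0)
    · by_contra hne
      obtain ⟨N, hN⟩ := ENNReal.exists_nat_gt
        (ENNReal.div_lt_top hne h0).ne
      have hN2 : rieszInf α n B / m0 < 2 ^ N := by
        refine lt_of_lt_of_le hN ?_
        calc ((N:ℕ) : ℝ≥0∞) ≤ ((2 ^ N : ℕ) : ℝ≥0∞) := Nat.cast_le.mpr (Nat.lt_two_pow_self (n := N)).le
          _ = 2 ^ N := by push_cast; ring
      have hlt : rieszInf α n B < 2 ^ N * m0 :=
        (ENNReal.div_lt_iff (Or.inl h0) (Or.inl hm0top)).mp hN2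
      have hge : 2 ^ N * m0 ≤ rieszInf α n B :=
        le_trans (rz_tower_rieszInf A h0 N) (rz_rieszInf_anti (hBsub N))
      exact lt_irrefl _ (lt_of_lt_of_le hlt hge)

end RZstep

section RZint
open Metric
variable {n : ℕ} {α : ℝ}

lemma rz_rpow_anti (hc : α - (n:ℝ) < 0) {a b : ℝ} (h : a ≤ b) :
    (ENNReal.ofReal b) ^ (α - (n:ℝ)) ≤ (ENNReal.ofReal a) ^ (α - (n:ℝ)) := by
  rw [show α - (n:ℝ) = -((n:ℝ) - α) by ring, ENNReal.rpow_neg, ENNReal.rpow_neg]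
  exact ENNReal.inv_le_inv.mpr
    (ENNReal.rpow_le_rpow (ENNReal.ofReal_le_ofReal h) (by linarith))

lemma rz_scale_cover {q r : ℝ} (hq : 1 < q) (h1 : 1 ≤ r) :
    ∃ k : ℕ, q ^ k ≤ r ∧ r < q ^ (k + 1) := by
  classical
  obtain ⟨M, hM⟩ := pow_unbounded_of_one_lt r hq
  have hP : ∃ k : ℕ, r < q ^ (k + 1) :=
    ⟨M, lt_of_lt_of_le hM (pow_le_pow_right₀ hq.le (Nat.le_succ M))⟩
  refine ⟨Nat.find hP, ?_, Nat.find_spec hP⟩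
  rcases Nat.eq_zero_or_pos (Nat.find hP) with h | h
  · rw [h, pow_zero]; exact h1
  · obtain ⟨j, hj⟩ := Nat.exists_eq_succ_of_ne_zero h.ne'
    have hmin := Nat.find_min hP (m := j) (by omega)
    push_neg at hmin
    rw [hj]; exact hmin

lemma rz_scale_cover_small {q r : ℝ} (hq : 1 < q) (h0 : 0 < r) (h1 : r < 1) :
    ∃ j : ℕ, (1/q) ^ (j + 1) ≤ r ∧ r < (1/q) ^ j := by
  classical
  have hq0 : 0 < q := lt_trans one_pos hq
  have hiq : 1/q < 1 := by rw [div_lt_one hq0]; exact hq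
  have hiq0 : 0 < 1/q := by positivity
  obtain ⟨M, hM⟩ := exists_pow_lt_of_lt_one h0 hiq
  have hQ : ∃ j : ℕ, (1/q) ^ (j + 1) ≤ r :=
    ⟨M, le_of_lt (lt_of_le_of_lt (pow_le_pow_of_le_one hiq0.le hiq.le (Nat.le_succ M)) hM)⟩
  refine ⟨Nat.find hQ, Nat.find_spec hQ, ?_⟩
  rcases Nat.eq_zero_or_pos (Nat.find hQ) with h | h
  · rw [h, pow_zero]; exact h1
  · obtain ⟨i, hi⟩ := Nat.exists_eq_succ_of_ne_zero h.ne'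
    have hmin := Nat.find_min hQ (m := i) (by omega)
    push_neg at hmin
    rw [hi]; exact hmin

lemma rz_nontrivial (hn : 0 < n) : Nontrivial (Eucl n) := by
  refine ⟨⟨EuclideanSpace.single ⟨0, hn⟩ (1:ℝ), 0, fun h => ?_⟩⟩
  have h0 := congrArg (fun v : Eucl n => v ⟨0, hn⟩) h
  simp [EuclideanSpace.single_apply] at h0

lemma rz_setLIntegral_translate (z : Eucl n) (r : ℝ) :
    ∫⁻ x in Metric.ball z r, (ENNReal.ofReal ‖x - z‖) ^ (α - (n:ℝ)) ∂volume
      = ∫⁻ y in Metric.ball (0:Eucl n) r, (ENNReal.ofReal ‖y‖) ^ (α - (n:ℝ)) ∂volume := by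
  have hmp : MeasurePreserving (fun x : Eucl n => x + z) volume volume :=
    measurePreserving_add_right volume z
  have hemb : MeasurableEmbedding (fun x : Eucl n => x + z) :=
    (MeasurableEquiv.addRight z).measurableEmbedding
  have hkey := hmp.setLIntegral_comp_preimage_emb hemb
    (fun x => (ENNReal.ofReal ‖x - z‖) ^ (α - (n:ℝ))) (Metric.ball z r)
  rw [← hkey]
  have hset : (fun x : Eucl n => x + z) ⁻¹' Metric.ball z r = Metric.ball (0:Eucl n) r := by
    ext a
    simp [Metric.mem_ball, dist_eq_norm, add_sub_cancel_right]
  rw [hset]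
  exact lintegral_congr fun a => by rw [add_sub_cancel_right]

lemma rz_kernel_integral_finite (hα : 0 < α) (hαn : α - (n:ℝ) < 0) (hn : 0 < n) (R : ℝ) :
    ∫⁻ y in Metric.ball (0 : Eucl n) R, (ENNReal.ofReal ‖y‖) ^ (α - (n:ℝ)) ∂volume ≠ ⊤ := by
  rcases le_or_gt R 0 with hR | hR
  · rw [Metric.ball_eq_empty.mpr hR]; simp
  haveI := rz_nontrivial hn
  set t : ℝ := 2⁻¹ with ht_def
  have ht0 : (0:ℝ) < t := by norm_num
  have ht1 : t < 1 := by norm_num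
  set s : ℕ → Set (Eucl n) := fun j => {y | R * t ^ (j+1) ≤ ‖y‖ ∧ ‖y‖ < R * t ^ j} with hs_def
  have hcover : Metric.ball (0:Eucl n) R ⊆ {0} ∪ ⋃ j, s j := by
    intro y hy
    rcases eq_or_ne y 0 with h | h
    · exact Or.inl h
    · right
      have hy0 : 0 < ‖y‖ := norm_pos_iff.mpr h
      have hyR : ‖y‖ < R := by simpa [dist_zero_right] using Metric.mem_ball.mp hy
      obtain ⟨j, hj1, hj2⟩ := rz_scale_cover_small (q := 2) one_lt_two
        (div_pos hy0 hR) ((div_lt_one hR).mpr hyR)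
      have h12 : (1/(2:ℝ)) = t := by norm_num
      rw [h12] at hj1 hj2
      refine mem_iUnion.mpr ⟨j, ?_, ?_⟩
      · calc R * t ^ (j+1) ≤ R * (‖y‖ / R) := by
              exact mul_le_mul_of_nonneg_left hj1 hR.le
          _ = ‖y‖ := by field_simp
      · calc ‖y‖ = R * (‖y‖ / R) := by field_simp
          _ < R * t ^ j := by exact mul_lt_mul_of_pos_left hj2 hR
  refine ne_top_of_le_ne_top ?_ (lintegral_mono_set hcover)
  have hsplit : ∫⁻ y in {(0:Eucl n)} ∪ ⋃ j, s j, (ENNReal.ofReal ‖y‖) ^ (α - (n:ℝ)) ∂volume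
      ≤ ∑' j, ∫⁻ y in s j, (ENNReal.ofReal ‖y‖) ^ (α - (n:ℝ)) ∂volume := by
    calc ∫⁻ y in {(0:Eucl n)} ∪ ⋃ j, s j, (ENNReal.ofReal ‖y‖) ^ (α - (n:ℝ)) ∂volume
        ≤ ∫⁻ y in {(0:Eucl n)}, (ENNReal.ofReal ‖y‖) ^ (α - (n:ℝ)) ∂volume
          + ∫⁻ y in ⋃ j, s j, (ENNReal.ofReal ‖y‖) ^ (α - (n:ℝ)) ∂volume :=
          lintegral_union_le _ _ _
      _ ≤ 0 + ∑' j, ∫⁻ y in s j, (ENNReal.ofReal ‖y‖) ^ (α - (n:ℝ)) ∂volume := by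
          refine add_le_add ?_ (lintegral_iUnion_le _ _)
          rw [setLIntegral_measure_zero _ _ (measure_singleton _)]
      _ = _ := by rw [zero_add]
  refine ne_top_of_le_ne_top ?_ hsplit
  -- per-shell bound
  set g : ℕ → ℝ := fun j => (R * t ^ (j+1)) ^ (α - (n:ℝ)) * (R * t ^ j) ^ n with hg_def
  have hgpos : ∀ j, 0 ≤ g j := by
    intro j
    have : (0:ℝ) ≤ (R * t ^ (j+1)) ^ (α - (n:ℝ)) := Real.rpow_nonneg (by positivity) _
    positivity
  have hV1 : volume (Metric.ball (0:Eucl n) 1) ≠ ⊤ := measure_ball_lt_top.ne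
  have hterm : ∀ j, ∫⁻ y in s j, (ENNReal.ofReal ‖y‖) ^ (α - (n:ℝ)) ∂volume
      ≤ ENNReal.ofReal (g j) * volume (Metric.ball (0:Eucl n) 1) := by
    intro j
    have hb0 : (0:ℝ) < R * t ^ (j+1) := by positivity
    calc ∫⁻ y in s j, (ENNReal.ofReal ‖y‖) ^ (α - (n:ℝ)) ∂volume
        ≤ ∫⁻ _ in s j, (ENNReal.ofReal (R * t ^ (j+1))) ^ (α - (n:ℝ)) ∂volume :=
          setLIntegral_mono measurable_const fun y hy => rz_rpow_anti hαn hy.1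
      _ = (ENNReal.ofReal (R * t ^ (j+1))) ^ (α - (n:ℝ)) * volume (s j) :=
          setLIntegral_const _ _
      _ ≤ (ENNReal.ofReal (R * t ^ (j+1))) ^ (α - (n:ℝ))
            * volume (Metric.ball (0:Eucl n) (R * t ^ j)) := by
          refine mul_le_mul_right (measure_mono ?_) _
          intro y hy
          rw [Metric.mem_ball, dist_zero_right]
          exact hy.2
      _ = (ENNReal.ofReal (R * t ^ (j+1))) ^ (α - (n:ℝ))
            * (ENNReal.ofReal ((R * t ^ j) ^ n) * volume (Metric.ball (0:Eucl n) 1)) := by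
          rw [Measure.addHaar_ball volume 0 (by positivity : (0:ℝ) ≤ R * t ^ j),
            finrank_euclideanSpace_fin]
      _ = ENNReal.ofReal (g j) * volume (Metric.ball (0:Eucl n) 1) := by
          rw [ENNReal.ofReal_rpow_of_pos hb0, ← mul_assoc,
            ← ENNReal.ofReal_mul (Real.rpow_nonneg hb0.le _)]
  -- geometric structure of g
  have hpowt : t ^ (α - (n:ℝ)) * (t:ℝ) ^ (n:ℕ) = t ^ α := by
    rw [← Real.rpow_natCast t n, ← Real.rpow_add ht0, sub_add_cancel]
  have hgstep : ∀ j, g (j+1) = t ^ α * g j := by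
    intro j
    show (R * t ^ (j+1+1)) ^ (α - (n:ℝ)) * (R * t ^ (j+1)) ^ n = t ^ α * g j
    rw [show R * t ^ (j+1) = t * (R * t ^ j) by ring,
      show R * t ^ (j+1+1) = t * (R * (t * t ^ j)) by ring]
    rw [Real.mul_rpow ht0.le (by positivity), mul_pow]
    calc t ^ (α - (n:ℝ)) * (R * (t * t ^ j)) ^ (α - (n:ℝ)) * ((t:ℝ) ^ (n:ℕ) * (R * t ^ j) ^ n)
        = (t ^ (α - (n:ℝ)) * (t:ℝ) ^ (n:ℕ)) * ((R * (t * t ^ j)) ^ (α - (n:ℝ)) * (R * t ^ j) ^ n) := by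
          ring
      _ = t ^ α * g j := by
          rw [hpowt, hg_def]
          congr 2
          ring
  have hgeom : ∀ j, g j = g 0 * (t ^ α) ^ j := by
    intro j; induction j with
    | zero => simp
    | succ j ih => rw [hgstep, ih, pow_succ]; ring
  have hr1 : ENNReal.ofReal (t ^ α) < 1 := by
    rw [← ENNReal.ofReal_one]
    exact ENNReal.ofReal_lt_ofReal_iff_of_nonneg (Real.rpow_nonneg ht0.le _) |>.mpr
      (Real.rpow_lt_one ht0.le ht1 hα)
  have hle : ∑' j, ∫⁻ y in s j, (ENNReal.ofReal ‖y‖) ^ (α - (n:ℝ)) ∂volume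
      ≤ (ENNReal.ofReal (g 0) * volume (Metric.ball (0:Eucl n) 1))
          * (1 - ENNReal.ofReal (t ^ α))⁻¹ := by
    calc ∑' j, ∫⁻ y in s j, (ENNReal.ofReal ‖y‖) ^ (α - (n:ℝ)) ∂volume
      ≤ ∑' j, ENNReal.ofReal (g j) * volume (Metric.ball (0:Eucl n) 1) :=
        ENNReal.tsum_le_tsum hterm
    _ = ∑' j, (ENNReal.ofReal (g 0) * volume (Metric.ball (0:Eucl n) 1))
          * (ENNReal.ofReal (t ^ α)) ^ j := by
        refine tsum_congr fun j => ?_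
        rw [hgeom j, ENNReal.ofReal_mul (hgpos 0),
          ENNReal.ofReal_pow (Real.rpow_nonneg ht0.le _)]
        ring
    _ = (ENNReal.ofReal (g 0) * volume (Metric.ball (0:Eucl n) 1))
          * (1 - ENNReal.ofReal (t ^ α))⁻¹ := by
        rw [ENNReal.tsum_mul_left, ENNReal.tsum_geometric]
  refine ne_top_of_le_ne_top ?_ hle
  refine mul_ne_top (mul_ne_top ENNReal.ofReal_ne_top hV1) ?_
  rw [ENNReal.inv_ne_top]
  intro hz
  have hpos := tsub_pos_iff_lt.mpr hr1
  rw [hz] at hpos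
  exact lt_irrefl 0 hpos

end RZint

section RZbounds
open Metric
variable {n : ℕ} {α : ℝ}

lemma rz_int_pot_near (ζ : Measure (Eucl n)) [IsFiniteMeasure ζ] {R ρ : ℝ}
    (hcar : ζ ((Metric.ball (0:Eucl n) R)ᶜ) = 0) :
    ∫⁻ x in Metric.ball (0:Eucl n) ρ, pot α n ζ x ∂volume
      ≤ ζ Set.univ *
        ∫⁻ y in Metric.ball (0:Eucl n) (ρ + R), (ENNReal.ofReal ‖y‖) ^ (α - (n:ℝ)) ∂volume := by
  have hswap : ∫⁻ x in Metric.ball (0:Eucl n) ρ, pot α n ζ x ∂volume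
      = ∫⁻ z, (∫⁻ x in Metric.ball (0:Eucl n) ρ, rieszK α n x z ∂volume) ∂ζ := by
    unfold pot
    exact lintegral_lintegral_swap rz_kernel_meas.aemeasurable
  rw [hswap]
  calc ∫⁻ z, (∫⁻ x in Metric.ball (0:Eucl n) ρ, rieszK α n x z ∂volume) ∂ζ
      ≤ ∫⁻ _, (∫⁻ y in Metric.ball (0:Eucl n) (ρ + R),
          (ENNReal.ofReal ‖y‖) ^ (α - (n:ℝ)) ∂volume) ∂ζ := by
        refine lintegral_mono_ae ?_
        filter_upwards [rz_ae_mem hcar] with z hz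
        have hzR : ‖z‖ < R := by simpa [dist_zero_right] using Metric.mem_ball.mp hz
        calc ∫⁻ x in Metric.ball (0:Eucl n) ρ, rieszK α n x z ∂volume
            ≤ ∫⁻ x in Metric.ball z (ρ + R), rieszK α n x z ∂volume := by
              refine lintegral_mono_set ?_
              intro x hx
              have hxρ : ‖x‖ < ρ := by simpa [dist_zero_right] using Metric.mem_ball.mp hx
              rw [Metric.mem_ball, dist_eq_norm]
              calc ‖x - z‖ ≤ ‖x‖ + ‖z‖ := norm_sub_le _ _
                _ < ρ + R := by linarith
          _ = ∫⁻ y in Metric.ball (0:Eucl n) (ρ + R),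
                (ENNReal.ofReal ‖y‖) ^ (α - (n:ℝ)) ∂volume := rz_setLIntegral_translate z (ρ + R)
    _ = ζ Set.univ * _ := by rw [lintegral_const, mul_comm]

lemma rz_int_pot_far (hαn : α - (n:ℝ) < 0) (ζ : Measure (Eucl n)) {d ρ : ℝ}
    (hcar : ζ ({z : Eucl n | d ≤ ‖z‖}ᶜ) = 0) :
    ∫⁻ x in Metric.ball (0:Eucl n) ρ, pot α n ζ x ∂volume
      ≤ (ENNReal.ofReal (d - ρ)) ^ (α - (n:ℝ)) * ζ Set.univ
          * volume (Metric.ball (0:Eucl n) ρ) := by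
  calc ∫⁻ x in Metric.ball (0:Eucl n) ρ, pot α n ζ x ∂volume
      ≤ ∫⁻ _ in Metric.ball (0:Eucl n) ρ,
          (ENNReal.ofReal (d - ρ)) ^ (α - (n:ℝ)) * ζ Set.univ ∂volume := by
        refine setLIntegral_mono measurable_const fun x hx => ?_
        have hxρ : ‖x‖ < ρ := by simpa [dist_zero_right] using Metric.mem_ball.mp hx
        show pot α n ζ x ≤ (ENNReal.ofReal (d - ρ)) ^ (α - (n:ℝ)) * ζ Set.univ
        unfold pot
        calc ∫⁻ z, rieszK α n x z ∂ζ
            ≤ ∫⁻ _, (ENNReal.ofReal (d - ρ)) ^ (α - (n:ℝ)) ∂ζ := by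
              refine lintegral_mono_ae ?_
              filter_upwards [rz_ae_mem hcar] with z hz
              refine rz_kernel_le hαn ?_
              calc d - ρ ≤ ‖z‖ - ‖x‖ := by
                    have : d ≤ ‖z‖ := hz
                    linarith
                _ ≤ ‖z - x‖ := norm_sub_norm_le _ _
                _ = ‖x - z‖ := by rw [norm_sub_rev]
          _ = (ENNReal.ofReal (d - ρ)) ^ (α - (n:ℝ)) * ζ Set.univ := lintegral_const _
    _ = (ENNReal.ofReal (d - ρ)) ^ (α - (n:ℝ)) * ζ Set.univ
          * volume (Metric.ball (0:Eucl n) ρ) := setLIntegral_const _ _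

lemma rz_geom_sum {C ρc : ℝ} (hC : 0 ≤ C) (hρ0 : 0 ≤ ρc) (hρ1 : ρc < 1) :
    ∑' j : ℕ, ENNReal.ofReal (C * ρc ^ j) ≠ ⊤ := by
  have hr1 : ENNReal.ofReal ρc < 1 := by
    rw [← ENNReal.ofReal_one]
    exact ENNReal.ofReal_lt_ofReal_iff_of_nonneg hρ0 |>.mpr hρ1
  have heq : ∀ j : ℕ, ENNReal.ofReal (C * ρc ^ j)
      = ENNReal.ofReal C * (ENNReal.ofReal ρc) ^ j := fun j => by
    rw [ENNReal.ofReal_mul hC, ENNReal.ofReal_pow hρ0]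
  rw [tsum_congr heq, ENNReal.tsum_mul_left, ENNReal.tsum_geometric]
  refine mul_ne_top ENNReal.ofReal_ne_top ?_
  rw [ENNReal.inv_ne_top]
  intro hz
  have hpos := tsub_pos_iff_lt.mpr hr1
  rw [hz] at hpos
  exact lt_irrefl 0 hpos

lemma rz_energy_top_of_restrict {lam : Measure (Eucl n)} [IsFiniteMeasure lam]
    {RR W : Set (Eucl n)} (hRR : MeasurableSet RR) (hpos : lam RR ≠ 0)
    (hcar : lam (Wᶜ ∩ RR) = 0) (hW : rieszInf α n W = ⊤) :
    energy α n lam lam = ⊤ := by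
  have hcne : (lam RR)⁻¹ ≠ ⊤ := ENNReal.inv_ne_top.mpr hpos
  have h1 : ((lam RR)⁻¹ • lam.restrict RR) Wᶜ = 0 := by
    rw [Measure.smul_apply, Measure.restrict_apply' hRR, hcar]; simp
  have h2 : ((lam RR)⁻¹ • lam.restrict RR) Set.univ = 1 := by
    rw [Measure.smul_apply, Measure.restrict_apply_univ, smul_eq_mul]
    exact ENNReal.inv_mul_cancel hpos (measure_ne_top lam RR)
  have h3 : (⊤ : ℝ≥0∞) ≤ energy α n ((lam RR)⁻¹ • lam.restrict RR)
      ((lam RR)⁻¹ • lam.restrict RR) := hW ▸ rz_rieszInf_le h1 h2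
  rw [rz_energy_smul_left, rz_energy_smul_right _ hcne] at h3
  have h4 : energy α n (lam.restrict RR) (lam.restrict RR) = ⊤ := by
    by_contra hne
    exact (mul_ne_top hcne (mul_ne_top hcne hne)) (top_le_iff.mp h3)
  refine top_unique ?_
  rw [← h4]
  exact rz_energy_mono Measure.restrict_le_self Measure.restrict_le_self

end RZbounds

section RZmain
open Metric

/-- If the Wiener-type series `Σ_k c_α(A ∩ {q^k ≤ |x| < q^{k+1}}) / q^{k(n−α)}`
converges, then there is a positive measure `ξ` whose Riesz potential is not
identically `+∞` and satisfies `U^ξ ≥ 1` nearly everywhere on `A`. -/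
theorem exists_measure_pot_ge_one_ne {n : ℕ} {α : ℝ} (hn : 3 ≤ n) (hα : 0 < α)
    (hα2 : α ≤ 2) (A : Set (Eucl n)) (q : ℝ) (hq : 1 < q)
    (hsum : ∑' k : ℕ,
        innerCap α n (A ∩ {x | q ^ k ≤ ‖x‖ ∧ ‖x‖ < q ^ (k + 1)}) /
          ENNReal.ofReal (q ^ ((k : ℝ) * ((n : ℝ) - α))) ≠ ⊤) :
    ∃ ξ : Measure (Eucl n), (∃ x, pot α n ξ x ≠ ⊤) ∧
      innerCap α n {x ∈ A | pot α n ξ x < 1} = 0 := by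
  classical
  have hn0 : 0 < n := by omega
  have hn3 : (3:ℝ) ≤ (n:ℝ) := by exact_mod_cast hn
  have hαn : α - (n:ℝ) < 0 := by linarith
  have hq0 : (0:ℝ) < q := lt_trans one_pos hq
  have hiq0 : (0:ℝ) < 1/q := by positivity
  have hiq1 : 1/q < 1 := by rw [div_lt_one hq0]; exact hq
  -- lower bounds on rieszInf of the pieces
  have hMoutGe : ∀ k : ℕ,
      (ENNReal.ofReal (2 * q ^ (k+1))) ^ (α - (n:ℝ)) ≤
        rieszInf α n (A ∩ {x : Eucl n | q ^ k ≤ ‖x‖ ∧ ‖x‖ < q ^ (k+1)}) := by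
    intro k
    refine rz_rieszInf_ge_of_bounded hαn ?_
    intro x hx z hz
    calc ‖x - z‖ ≤ ‖x‖ + ‖z‖ := norm_sub_le _ _
      _ ≤ 2 * q ^ (k+1) := by
          have h1 := hx.2.2; have h2 := hz.2.2; linarith
  have hMinGe : ∀ j : ℕ,
      (ENNReal.ofReal (2 * (1/q) ^ j)) ^ (α - (n:ℝ)) ≤
        rieszInf α n (A ∩ {x : Eucl n | (1/q) ^ (j+1) ≤ ‖x‖ ∧ ‖x‖ < (1/q) ^ j}) := by
    intro j
    refine rz_rieszInf_ge_of_bounded hαn ?_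
    intro x hx z hz
    calc ‖x - z‖ ≤ ‖x‖ + ‖z‖ := norm_sub_le _ _
      _ ≤ 2 * (1/q) ^ j := by
          have h1 := hx.2.2; have h2 := hz.2.2; linarith
  have hMout : ∀ k : ℕ,
      rieszInf α n (A ∩ {x : Eucl n | q ^ k ≤ ‖x‖ ∧ ‖x‖ < q ^ (k+1)}) ≠ 0 := by
    intro k
    have hpos : (0:ℝ≥0∞) < (ENNReal.ofReal (2 * q ^ (k+1))) ^ (α - (n:ℝ)) :=
      ENNReal.rpow_pos (ENNReal.ofReal_pos.mpr (by positivity)) ENNReal.ofReal_ne_top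
    intro hz
    have h := hMoutGe k
    rw [hz] at h
    exact hpos.ne' (le_antisymm h zero_le)
  have hMin : ∀ j : ℕ,
      rieszInf α n (A ∩ {x : Eucl n | (1/q) ^ (j+1) ≤ ‖x‖ ∧ ‖x‖ < (1/q) ^ j}) ≠ 0 := by
    intro j
    have hpos : (0:ℝ≥0∞) < (ENNReal.ofReal (2 * (1/q) ^ j)) ^ (α - (n:ℝ)) :=
      ENNReal.rpow_pos (ENNReal.ofReal_pos.mpr (by positivity)) ENNReal.ofReal_ne_top
    intro hz
    have h := hMinGe j
    rw [hz] at h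
    exact hpos.ne' (le_antisymm h zero_le)
  -- choose the per-piece measures
  choose ξout hSFout hcarout hmassout hbadout using fun k : ℕ =>
    rz_piece (α := α) (A ∩ {x : Eucl n | q ^ k ≤ ‖x‖ ∧ ‖x‖ < q ^ (k+1)}) (hMout k)
  choose ξin hSFin hcarin hmassin hbadin using fun j : ℕ =>
    rz_piece (α := α) (A ∩ {x : Eucl n | (1/q) ^ (j+1) ≤ ‖x‖ ∧ ‖x‖ < (1/q) ^ j}) (hMin j)
  haveI : ∀ k, SFinite (ξout k) := hSFout
  haveI : ∀ j, SFinite (ξin j) := hSFin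
  haveI hfin_in : ∀ j, IsFiniteMeasure (ξin j) := by
    intro j
    refine ⟨lt_of_le_of_lt (hmassin j) ?_⟩
    exact ENNReal.mul_lt_top (by norm_num) (ENNReal.inv_lt_top.mpr (hMin j).bot_lt)
  haveI hfin_out : ∀ k, IsFiniteMeasure (ξout k) := by
    intro k
    refine ⟨lt_of_le_of_lt (hmassout k) ?_⟩
    exact ENNReal.mul_lt_top (by norm_num) (ENNReal.inv_lt_top.mpr (hMout k).bot_lt)
  have hξin_le : ∀ j, ξin j ≤ Measure.sum ξin + Measure.sum ξout := by
    intro j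
    exact (Measure.le_sum ξin j).trans (Measure.le_add_right le_rfl)
  have hξout_le : ∀ k, ξout k ≤ Measure.sum ξin + Measure.sum ξout := by
    intro k
    exact (Measure.le_sum ξout k).trans (Measure.le_add_left le_rfl)
  refine ⟨Measure.sum ξin + Measure.sum ξout, ?_, ?_⟩
  · -- PART 1: the potential is finite somewhere
    set W : Set (Eucl n) := Metric.ball (0:Eucl n) 2⁻¹ with hW
    have hin_sub : ∀ j, (A ∩ {x : Eucl n | (1/q)^(j+1) ≤ ‖x‖ ∧ ‖x‖ < (1/q)^j})
        ⊆ Metric.ball (0:Eucl n) 1 := by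
      intro j x hx
      rw [Metric.mem_ball, dist_zero_right]
      exact lt_of_lt_of_le hx.2.2 (pow_le_one₀ hiq0.le hiq1.le)
    have hin_car : ∀ j, (ξin j) ((Metric.ball (0:Eucl n) 1)ᶜ) = 0 := fun j =>
      measure_mono_null (compl_subset_compl.mpr (hin_sub j)) (hcarin j)
    set CB := ∫⁻ y in Metric.ball (0:Eucl n) ((2⁻¹:ℝ) + 1),
      (ENNReal.ofReal ‖y‖) ^ (α-(n:ℝ)) ∂volume with hCB
    have hCBne : CB ≠ ⊤ := rz_kernel_integral_finite hα hαn hn0 _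
    have hmass_in2 : ∀ j, (ξin j) Set.univ
        ≤ 8 * (ENNReal.ofReal (2*(1/q)^j)) ^ ((n:ℝ) - α) := by
      intro j
      refine le_trans (hmassin j) (mul_le_mul_right ?_ _)
      have h1 := ENNReal.inv_le_inv.mpr (hMinGe j)
      rwa [← ENNReal.rpow_neg, neg_sub] at h1
    have hTin : ∀ j, ∫⁻ x in W, pot α n (ξin j) x ∂volume
        ≤ (8 * (ENNReal.ofReal (2*(1/q)^j)) ^ ((n:ℝ) - α)) * CB := fun j =>
      le_trans (rz_int_pot_near (ξin j) (hin_car j)) (mul_le_mul_left (hmass_in2 j) _)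
    have hgeo_in : ∑' j:ℕ, (ENNReal.ofReal (2*(1/q)^j)) ^ ((n:ℝ)-α) ≠ ⊤ := by
      have heq : ∀ j:ℕ, (ENNReal.ofReal (2*(1/q)^j)) ^ ((n:ℝ)-α)
          = ENNReal.ofReal ((2:ℝ)^((n:ℝ)-α) * ((1/q)^((n:ℝ)-α))^j) := by
        intro j
        rw [ENNReal.ofReal_rpow_of_pos (by positivity)]
        congr 1
        rw [Real.mul_rpow (by norm_num) (by positivity)]
        congr 1
        rw [← Real.rpow_natCast (1/q) j, ← Real.rpow_mul hiq0.le, mul_comm,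
          Real.rpow_mul hiq0.le, Real.rpow_natCast]
      rw [tsum_congr heq]
      exact rz_geom_sum (Real.rpow_nonneg (by norm_num) _) (Real.rpow_nonneg hiq0.le _)
        (Real.rpow_lt_one hiq0.le hiq1 (by linarith))
    have hin_fin : ∑' j, ∫⁻ x in W, pot α n (ξin j) x ∂volume ≠ ⊤ := by
      refine ne_top_of_le_ne_top ?_ (ENNReal.tsum_le_tsum hTin)
      have heq2 : ∑' j:ℕ, (8 * (ENNReal.ofReal (2*(1/q)^j)) ^ ((n:ℝ)-α)) * CB
          = (8 * CB) * ∑' j:ℕ, (ENNReal.ofReal (2*(1/q)^j)) ^ ((n:ℝ)-α) := by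
        rw [← ENNReal.tsum_mul_left]
        exact tsum_congr fun j => by ring
      rw [heq2]
      exact mul_ne_top (mul_ne_top (by norm_num) hCBne) hgeo_in
    have hout_car : ∀ k, (ξout k) ({z : Eucl n | q^k ≤ ‖z‖}ᶜ) = 0 := by
      intro k
      refine measure_mono_null (compl_subset_compl.mpr ?_) (hcarout k)
      exact fun x hx => hx.2.1
    have hV : volume W ≠ ⊤ := measure_ball_lt_top.ne
    have hicap : ∀ k:ℕ, (rieszInf α n (A ∩ {x : Eucl n | q ^ k ≤ ‖x‖ ∧ ‖x‖ < q ^ (k+1)}))⁻¹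
        = innerCap α n (A ∩ {x : Eucl n | q ^ k ≤ ‖x‖ ∧ ‖x‖ < q ^ (k+1)}) := by
      intro k; rw [rz_innerCap_def, one_div]
    have hkey_out : ∀ k:ℕ, (ENNReal.ofReal (q^k * 2⁻¹)) ^ (α-(n:ℝ))
        = (ENNReal.ofReal (2⁻¹:ℝ)) ^ (α-(n:ℝ))
            * (ENNReal.ofReal (q ^ ((k:ℝ)*((n:ℝ)-α))))⁻¹ := by
      intro k
      rw [ENNReal.ofReal_mul (by positivity),
        ENNReal.mul_rpow_of_ne_top ENNReal.ofReal_ne_top ENNReal.ofReal_ne_top, mul_comm]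
      congr 1
      rw [ENNReal.ofReal_rpow_of_pos (by positivity)]
      rw [show ((q:ℝ)^k) ^ (α-(n:ℝ)) = (q ^ ((k:ℝ)*((n:ℝ)-α)))⁻¹ from ?_,
        ENNReal.ofReal_inv_of_pos (Real.rpow_pos_of_pos hq0 _)]
      rw [← Real.rpow_natCast q k, ← Real.rpow_mul hq0.le, ← Real.rpow_neg hq0.le]
      congr 1
      ring
    have hTout : ∀ k, ∫⁻ x in W, pot α n (ξout k) x ∂volume
        ≤ ((ENNReal.ofReal (2⁻¹:ℝ)) ^ (α-(n:ℝ)) * 8 * volume W)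
            * (innerCap α n (A ∩ {x : Eucl n | q ^ k ≤ ‖x‖ ∧ ‖x‖ < q ^ (k+1)})
                / ENNReal.ofReal (q ^ ((k:ℝ)*((n:ℝ)-α)))) := by
      intro k
      have hq1k : (1:ℝ) ≤ q ^ k := one_le_pow₀ hq.le
      calc ∫⁻ x in W, pot α n (ξout k) x ∂volume
          ≤ (ENNReal.ofReal (q^k - 2⁻¹)) ^ (α-(n:ℝ)) * (ξout k) Set.univ * volume W :=
            rz_int_pot_far hαn (ξout k) (hout_car k)
        _ ≤ (ENNReal.ofReal (q^k * 2⁻¹)) ^ (α-(n:ℝ))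
              * (8 * (rieszInf α n (A ∩ {x : Eucl n | q ^ k ≤ ‖x‖ ∧ ‖x‖ < q ^ (k+1)}))⁻¹)
              * volume W := by
            refine mul_le_mul_left (mul_le_mul ?_ (hmassout k) zero_le zero_le) _
            exact rz_rpow_anti hαn (by linarith)
        _ = _ := by
            rw [hicap k, hkey_out k, div_eq_mul_inv]
            ring
    have hout_fin : ∑' k, ∫⁻ x in W, pot α n (ξout k) x ∂volume ≠ ⊤ := by
      refine ne_top_of_le_ne_top ?_ (ENNReal.tsum_le_tsum hTout)
      rw [ENNReal.tsum_mul_left]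
      refine mul_ne_top ?_ hsum
      refine mul_ne_top (mul_ne_top ?_ (by norm_num)) hV
      rw [ENNReal.ofReal_rpow_of_pos (by norm_num)]
      exact ENNReal.ofReal_ne_top
    have htotal : ∫⁻ x in W, pot α n (Measure.sum ξin + Measure.sum ξout) x ∂volume ≠ ⊤ := by
      have hsplit : ∫⁻ x in W, pot α n (Measure.sum ξin + Measure.sum ξout) x ∂volume
          = (∑' j, ∫⁻ x in W, pot α n (ξin j) x ∂volume)
            + ∑' k, ∫⁻ x in W, pot α n (ξout k) x ∂volume := by
        calc ∫⁻ x in W, pot α n (Measure.sum ξin + Measure.sum ξout) x ∂volume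
            = ∫⁻ x in W, (∑' j, pot α n (ξin j) x) + ∑' k, pot α n (ξout k) x ∂volume := by
              refine lintegral_congr fun x => ?_
              rw [rz_pot_add, rz_pot_sum, rz_pot_sum]
          _ = (∫⁻ x in W, ∑' j, pot α n (ξin j) x ∂volume)
              + ∫⁻ x in W, ∑' k, pot α n (ξout k) x ∂volume := by
              refine lintegral_add_left ?_ _
              exact Measurable.ennreal_tsum fun j => rz_pot_meas (ξin j)
          _ = _ := by
              rw [lintegral_tsum (fun j => (rz_pot_meas (ξin j)).aemeasurable),
                lintegral_tsum (fun k => (rz_pot_meas (ξout k)).aemeasurable)]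
      rw [hsplit]
      exact ENNReal.add_ne_top.mpr ⟨hin_fin, hout_fin⟩
    by_contra hno
    push_neg at hno
    have htop : ∫⁻ x in W, pot α n (Measure.sum ξin + Measure.sum ξout) x ∂volume = ⊤ := by
      calc ∫⁻ x in W, pot α n (Measure.sum ξin + Measure.sum ξout) x ∂volume
          = ∫⁻ _ in W, ⊤ ∂volume := lintegral_congr fun x => hno x
        _ = ⊤ * volume W := setLIntegral_const _ _
        _ = ⊤ := ENNReal.top_mul ((measure_ball_pos volume (0:Eucl n) (by norm_num)).ne')
    exact htotal htop
  · -- PART 2: capacity of the bad set is zero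
    apply rz_innerCap_zero
    apply top_unique
    apply rz_le_rieszInf
    intro lam hlamc hlamm
    haveI : IsFiniteMeasure lam := ⟨by rw [hlamm]; exact one_lt_top⟩
    suffices h : energy α n lam lam = ⊤ by rw [h]
    have hcov : (Set.univ : Set (Eucl n)) ⊆ {0} ∪
        ((⋃ j, {x : Eucl n | (1/q) ^ (j+1) ≤ ‖x‖ ∧ ‖x‖ < (1/q) ^ j}) ∪
          ⋃ k, {x : Eucl n | q ^ k ≤ ‖x‖ ∧ ‖x‖ < q ^ (k+1)}) := by
      intro x _
      rcases eq_or_ne x 0 with hx | hx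
      · exact Or.inl hx
      right
      have hx0 : 0 < ‖x‖ := norm_pos_iff.mpr hx
      rcases le_or_gt 1 ‖x‖ with h1 | h1
      · right
        obtain ⟨k, hk1, hk2⟩ := rz_scale_cover hq h1
        exact mem_iUnion.mpr ⟨k, hk1, hk2⟩
      · left
        obtain ⟨j, hj1, hj2⟩ := rz_scale_cover_small hq hx0 h1
        exact mem_iUnion.mpr ⟨j, hj1, hj2⟩
    have hone : (1:ℝ≥0∞) ≤ lam {0} +
        ((∑' j, lam {x : Eucl n | (1/q) ^ (j+1) ≤ ‖x‖ ∧ ‖x‖ < (1/q) ^ j}) +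
          ∑' k, lam {x : Eucl n | q ^ k ≤ ‖x‖ ∧ ‖x‖ < q ^ (k+1)}) := by
      calc (1:ℝ≥0∞) = lam Set.univ := hlamm.symm
        _ ≤ lam ({0} ∪ ((⋃ j, {x : Eucl n | (1/q) ^ (j+1) ≤ ‖x‖ ∧ ‖x‖ < (1/q) ^ j}) ∪
              ⋃ k, {x : Eucl n | q ^ k ≤ ‖x‖ ∧ ‖x‖ < q ^ (k+1)})) := measure_mono hcov
        _ ≤ lam {0} + lam ((⋃ j, {x : Eucl n | (1/q) ^ (j+1) ≤ ‖x‖ ∧ ‖x‖ < (1/q) ^ j}) ∪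
              ⋃ k, {x : Eucl n | q ^ k ≤ ‖x‖ ∧ ‖x‖ < q ^ (k+1)}) := measure_union_le _ _
        _ ≤ _ := by
            refine add_le_add le_rfl ?_
            refine le_trans (measure_union_le _ _) ?_
            exact add_le_add (measure_iUnion_le _) (measure_iUnion_le _)
    have hmeasR : ∀ a b : ℝ, MeasurableSet {x : Eucl n | a ≤ ‖x‖ ∧ ‖x‖ < b} := by
      intro a b
      have h1 : MeasurableSet {x : Eucl n | a ≤ ‖x‖} :=
        measurableSet_le measurable_const measurable_norm
      have h2 : MeasurableSet {x : Eucl n | ‖x‖ < b} :=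
        measurableSet_lt measurable_norm measurable_const
      have : {x : Eucl n | a ≤ ‖x‖ ∧ ‖x‖ < b}
          = {x : Eucl n | a ≤ ‖x‖} ∩ {x : Eucl n | ‖x‖ < b} := rfl
      rw [this]; exact h1.inter h2
    have hdec : lam {0} ≠ 0 ∨
        (∃ j, lam {x : Eucl n | (1/q) ^ (j+1) ≤ ‖x‖ ∧ ‖x‖ < (1/q) ^ j} ≠ 0) ∨
        (∃ k, lam {x : Eucl n | q ^ k ≤ ‖x‖ ∧ ‖x‖ < q ^ (k+1)} ≠ 0) := by
      by_contra hcon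
      push_neg at hcon
      obtain ⟨h1, h2, h3⟩ := hcon
      rw [h1, ENNReal.tsum_eq_zero.mpr h2, ENNReal.tsum_eq_zero.mpr h3] at hone
      simp at hone
    rcases hdec with h0 | ⟨j, hj⟩ | ⟨k, hk⟩
    · refine rz_energy_top_of_restrict (RR := {0})
        (W := {x ∈ A | pot α n (Measure.sum ξin + Measure.sum ξout) x < 1} ∩ {0})
        (MeasurableSet.singleton 0) h0 ?_ (rz_rieszInf_singleton hαn inter_subset_right)
      refine measure_mono_null ?_ hlamc
      intro x hx hxS
      exact hx.1 ⟨hxS, hx.2⟩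
    · refine rz_energy_top_of_restrict
        (RR := {x : Eucl n | (1/q) ^ (j+1) ≤ ‖x‖ ∧ ‖x‖ < (1/q) ^ j})
        (W := {x ∈ A ∩ {x : Eucl n | (1/q) ^ (j+1) ≤ ‖x‖ ∧ ‖x‖ < (1/q) ^ j} |
          pot α n (ξin j) x < 1})
        (hmeasR _ _) hj ?_ (hbadin j)
      refine measure_mono_null ?_ hlamc
      intro x hx hxS
      refine hx.1 ⟨⟨hxS.1, hx.2⟩, ?_⟩
      exact lt_of_le_of_lt (rz_pot_mono (hξin_le j) x) hxS.2
    · refine rz_energy_top_of_restrict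
        (RR := {x : Eucl n | q ^ k ≤ ‖x‖ ∧ ‖x‖ < q ^ (k+1)})
        (W := {x ∈ A ∩ {x : Eucl n | q ^ k ≤ ‖x‖ ∧ ‖x‖ < q ^ (k+1)} |
          pot α n (ξout k) x < 1})
        (hmeasR _ _) hk ?_ (hbadout k)
      refine measure_mono_null ?_ hlamc
      intro x hx hxS
      refine hx.1 ⟨⟨hxS.1, hx.2⟩, ?_⟩
      exact lt_of_le_of_lt (rz_pot_mono (hξout_le k) x) hxS.2

end RZmain
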